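/- For τ > 0, a matrix Q ∈ ℝ^{m×n} with SVD Q = U_Q (Σ_{Q1} + Σ_{Q2}) V_Qᵀ, where Σ_{Q1} = diag(σ₁,…,σ_N,0,…,0) contains the leading N singular values and Σ_{Q2} = diag(0,…,0,σ_{N+1},…), the partial singular value thresholding operator P_{N,τ}[Q] = U_Q (Σ_{Q1} + S_τ[Σ_{Q2}]) V_Qᵀ minimizes P ↦ τ‖P‖_{r=N} + (1/2)‖P − Q‖_F², where ‖P‖_{r=N} = Σ_{i>N} σ_i(P) is the sum of singular values of P beyond the N-th. -/

import Mathlib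

open Matrix

/-- Squared Frobenius norm. -/
noncomputable def frobSq {m n : ℕ} (A : Matrix (Fin m) (Fin n) ℝ) : ℝ :=
  ∑ i, ∑ j, (A i j) ^ 2

/-- Unsorted singular values of A: square roots of eigenvalues of AᵀA. -/
noncomputable def svals {m n : ℕ} (A : Matrix (Fin m) (Fin n) ℝ) : Fin n → ℝ :=
  fun i => Real.sqrt ((Matrix.isHermitian_conjTranspose_mul_self A).eigenvalues i)

/-- Singular values of A sorted in nonincreasing order: `svalsDesc A 0` is the
largest singular value. -/
noncomputable def svalsDesc {m n : ℕ} (A : Matrix (Fin m) (Fin n) ℝ) : Fin n → ℝ :=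
  fun i => (svals A ∘ Tuple.sort (svals A)) i.rev

/-- Partial sum of singular values beyond the N-th: ‖A‖_{r=N} = Σ_{i>N} σ_i(A)
(1-based indexing, i.e. 0-based indices i with N ≤ i). -/
noncomputable def partialSumNorm {m n : ℕ} (N : ℕ) (A : Matrix (Fin m) (Fin n) ℝ) : ℝ :=
  ∑ i ∈ Finset.univ.filter (fun i : Fin n => N ≤ (i : ℕ)), svalsDesc A i

/-- Scalar soft-thresholding operator. -/
noncomputable def softThresh (τ σ : ℝ) : ℝ :=
  Real.sign σ * max (|σ| - τ) 0

section PSVTAux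

open Finset Polynomial

namespace PSVT

variable {k : ℕ}

/-- Successive differences of a tuple. -/
noncomputable def delta (a : Fin k → ℝ) : Fin k → ℝ :=
  fun t => if h : (t : ℕ) + 1 < k then a t - a ⟨(t : ℕ) + 1, h⟩ else a t

lemma delta_nonneg {a : Fin k → ℝ} (ha : Antitone a) (ha0 : ∀ i, 0 ≤ a i) (t : Fin k) :
    0 ≤ delta a t := by
  unfold delta
  split
  · exact sub_nonneg.mpr (ha (by simp [Fin.le_def]))
  · exact ha0 t

lemma tele (a : Fin k → ℝ) (i : Fin k) :
    ∑ t, (if i ≤ t then delta a t else 0) = a i := by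
  match k with
  | 0 => exact i.elim0
  | k + 1 =>
    induction i using Fin.reverseInduction with
    | last =>
      have h1 : ∀ t : Fin (k+1), (if Fin.last k ≤ t then delta a t else 0)
          = if t = Fin.last k then delta a t else 0 := by
        intro t; congr 1; simp only [Fin.last_le_iff]
      rw [Finset.sum_congr rfl (fun t _ => h1 t), Finset.sum_ite_eq' univ (Fin.last k)]
      simp [delta]
    | cast i ih =>
      have key : ∀ t : Fin (k+1), (if i.castSucc ≤ t then delta a t else 0)
          = (if t = i.castSucc then delta a t else 0) + (if i.succ ≤ t then delta a t else 0) := by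
        intro t
        rcases eq_or_ne t i.castSucc with h | h
        · subst h
          have h3 : ¬ (i.succ ≤ i.castSucc) := by simp [Fin.le_def]
          simp [h3]
        · have h2 : i.castSucc ≤ t ↔ i.succ ≤ t := by
            simp only [Fin.le_def, Fin.coe_castSucc, Fin.val_succ]
            constructor
            · intro hle
              rcases lt_or_eq_of_le hle with h' | h'
              · omega
              · exact absurd (Fin.ext h'.symm : t = i.castSucc) h
            · omega
          simp only [h2]
          rw [if_neg h, zero_add]
      rw [Finset.sum_congr rfl (fun t _ => key t), Finset.sum_add_distrib,
        Finset.sum_ite_eq' univ i.castSucc, ih]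
      have hd : delta a i.castSucc = a i.castSucc - a i.succ := by
        unfold delta
        rw [dif_pos (by simp)]
        congr 1
      simp only [mem_univ, if_true, hd]
      ring

lemma substochastic_rearrangement (a b : Fin k → ℝ) (ha : Antitone a) (hb : Antitone b)
    (ha0 : ∀ i, 0 ≤ a i) (hb0 : ∀ i, 0 ≤ b i)
    (C : Fin k → Fin k → ℝ) (hC0 : ∀ i j, 0 ≤ C i j)
    (hrow : ∀ i, ∑ j, C i j ≤ 1) (hcol : ∀ j, ∑ i, C i j ≤ 1) :
    ∑ i, ∑ j, C i j * (a i * b j) ≤ ∑ i, a i * b i := by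
  set da := delta a with hda
  set db := delta b with hdb
  have hda0 : ∀ t, 0 ≤ da t := delta_nonneg ha ha0
  have hdb0 : ∀ t, 0 ≤ db t := delta_nonneg hb hb0
  set F : Fin k → Fin k → Fin k → Fin k → ℝ := fun i j t u =>
    (if i ≤ t then (if j ≤ u then C i j else 0) else 0) * (da t * db u) with hF
  have step1 : ∑ i, ∑ j, C i j * (a i * b j) = ∑ i, ∑ j, ∑ t, ∑ u, F i j t u := by
    refine Finset.sum_congr rfl (fun i _ => Finset.sum_congr rfl (fun j _ => ?_))
    rw [← tele a i, ← tele b j]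
    rw [Finset.sum_mul_sum]
    rw [Finset.mul_sum]
    refine Finset.sum_congr rfl (fun t _ => ?_)
    rw [Finset.mul_sum]
    refine Finset.sum_congr rfl (fun u _ => ?_)
    simp only [hF]
    by_cases h1 : i ≤ t <;> by_cases h2 : j ≤ u <;> simp [h1, h2, hda, hdb] <;> ring
  have step2 : ∑ i, ∑ j, ∑ t, ∑ u, F i j t u = ∑ t, ∑ u, ∑ i, ∑ j, F i j t u := by
    calc ∑ i, ∑ j, ∑ t, ∑ u, F i j t u
        = ∑ i, ∑ t, ∑ j, ∑ u, F i j t u :=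
          Finset.sum_congr rfl (fun i _ => Finset.sum_comm)
      _ = ∑ t, ∑ i, ∑ j, ∑ u, F i j t u := Finset.sum_comm
      _ = ∑ t, ∑ i, ∑ u, ∑ j, F i j t u :=
          Finset.sum_congr rfl (fun t _ => Finset.sum_congr rfl (fun i _ => Finset.sum_comm))
      _ = ∑ t, ∑ u, ∑ i, ∑ j, F i j t u :=
          Finset.sum_congr rfl (fun t _ => Finset.sum_comm)
  have step3 : ∀ t u, ∑ i, ∑ j, F i j t u
      = (∑ i, ∑ j, (if i ≤ t then (if j ≤ u then C i j else 0) else 0)) * (da t * db u) := by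
    intro t u
    rw [Finset.sum_mul]
    refine Finset.sum_congr rfl (fun i _ => ?_)
    rw [Finset.sum_mul]
  set S : Fin k → Fin k → ℝ := fun t u =>
    ∑ i, ∑ j, (if i ≤ t then (if j ≤ u then C i j else 0) else 0) with hS
  set cnt : Fin k → Fin k → ℝ := fun t u =>
    ∑ i, (if i ≤ t then (if i ≤ u then (1:ℝ) else 0) else 0) with hcnt
  have hScnt : ∀ t u, S t u ≤ cnt t u := by
    intro t u
    rcases le_total t u with h | h
    · refine Finset.sum_le_sum (fun i _ => ?_)
      by_cases hit : i ≤ t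
      · simp only [if_pos hit, if_pos (hit.trans h)]
        calc (∑ j, if j ≤ u then C i j else 0) ≤ ∑ j, C i j :=
              Finset.sum_le_sum (fun j _ => by split; exacts [le_rfl, hC0 i j])
          _ ≤ 1 := hrow i
      · simp [hit]
    · have hswap : S t u = ∑ j, ∑ i, (if i ≤ t then (if j ≤ u then C i j else 0) else 0) :=
        Finset.sum_comm
      have hcnt' : cnt t u = ∑ j : Fin k, (if j ≤ u then (if j ≤ t then (1:ℝ) else 0) else 0) := by
        refine Finset.sum_congr rfl (fun i _ => ?_)
        by_cases h1 : i ≤ t <;> by_cases h2 : i ≤ u <;> simp [h1, h2]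
      rw [hswap, hcnt']
      refine Finset.sum_le_sum (fun j _ => ?_)
      by_cases hju : j ≤ u
      · simp only [if_pos hju, if_pos (hju.trans h)]
        calc (∑ i, if i ≤ t then C i j else 0) ≤ ∑ i, C i j :=
              Finset.sum_le_sum (fun i _ => by split; exacts [le_rfl, hC0 i j])
          _ ≤ 1 := hcol j
      · simp [hju]
  have final : ∑ t, ∑ u, cnt t u * (da t * db u) = ∑ i, a i * b i := by
    set G : Fin k → Fin k → Fin k → ℝ := fun i t u =>
      (if i ≤ t then da t else 0) * (if i ≤ u then db u else 0) with hG
    have e1 : ∀ t u, cnt t u * (da t * db u) = ∑ i, G i t u := by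
      intro t u
      rw [Finset.sum_mul]
      refine Finset.sum_congr rfl (fun i _ => ?_)
      simp only [hG]
      by_cases h1 : i ≤ t <;> by_cases h2 : i ≤ u <;> simp [h1, h2] <;> ring
    calc ∑ t, ∑ u, cnt t u * (da t * db u) = ∑ t, ∑ u, ∑ i, G i t u :=
          Finset.sum_congr rfl (fun t _ => Finset.sum_congr rfl (fun u _ => e1 t u))
      _ = ∑ t, ∑ i, ∑ u, G i t u := Finset.sum_congr rfl (fun t _ => Finset.sum_comm)
      _ = ∑ i, ∑ t, ∑ u, G i t u := Finset.sum_comm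
      _ = ∑ i, a i * b i := by
          refine Finset.sum_congr rfl (fun i _ => ?_)
          conv_rhs => rw [← tele a i, ← tele b i]
          rw [Finset.sum_mul_sum]
  calc ∑ i, ∑ j, C i j * (a i * b j)
      = ∑ t, ∑ u, S t u * (da t * db u) := by
        rw [step1, step2]
        exact Finset.sum_congr rfl (fun t _ => Finset.sum_congr rfl (fun u _ => step3 t u))
    _ ≤ ∑ t, ∑ u, cnt t u * (da t * db u) := by
        refine Finset.sum_le_sum (fun t _ => Finset.sum_le_sum (fun u _ => ?_))
        exact mul_le_mul_of_nonneg_right (hScnt t u) (mul_nonneg (hda0 t) (hdb0 u))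
    _ = ∑ i, a i * b i := final

/-- Bessel-type inequality for a family that is "orthonormal or zero". -/
lemma bessel {r : ℕ} {α : Type*} [Fintype α] (v : Fin r → α → ℝ) (c : Fin r → ℝ)
    (hv : ∀ i j, ∑ a, v i a * v j a = if i = j then c i else 0)
    (hc : ∀ i, c i ≤ 1) (x : α → ℝ) :
    ∑ i, (∑ a, x a * v i a) ^ 2 ≤ ∑ a, x a * x a := by
  set t : Fin r → ℝ := fun i => ∑ a, x a * v i a with ht
  set y : α → ℝ := fun a => ∑ i, t i * v i a with hy
  have key : 0 ≤ ∑ a, (x a - y a) ^ 2 :=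
    Finset.sum_nonneg fun a _ => sq_nonneg _
  have e0 : ∑ a, (x a - y a) ^ 2
      = ∑ a, x a * x a - 2 * ∑ a, x a * y a + ∑ a, y a * y a := by
    have : ∀ a, (x a - y a) ^ 2 = x a * x a - 2 * (x a * y a) + y a * y a := fun a => by ring
    rw [Finset.sum_congr rfl (fun a _ => this a), Finset.sum_add_distrib,
      Finset.sum_sub_distrib, ← Finset.mul_sum]
  have e1 : ∑ a, x a * y a = ∑ i, t i * t i := by
    calc ∑ a, x a * y a = ∑ a, ∑ i, t i * (x a * v i a) := by
          refine Finset.sum_congr rfl (fun a _ => ?_)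
          rw [hy, Finset.mul_sum]
          exact Finset.sum_congr rfl (fun i _ => by ring)
      _ = ∑ i, ∑ a, t i * (x a * v i a) := Finset.sum_comm
      _ = ∑ i, t i * t i := by
          refine Finset.sum_congr rfl (fun i _ => ?_)
          rw [← Finset.mul_sum, ht]
  have e2 : ∑ a, y a * y a = ∑ i, c i * (t i * t i) := by
    calc ∑ a, y a * y a = ∑ a, ∑ i, ∑ j, (t i * t j) * (v i a * v j a) := by
          refine Finset.sum_congr rfl (fun a _ => ?_)
          rw [hy, Finset.sum_mul_sum]
          exact Finset.sum_congr rfl (fun i _ => Finset.sum_congr rfl (fun j _ => by ring))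
      _ = ∑ i, ∑ j, ∑ a, (t i * t j) * (v i a * v j a) := by
          rw [Finset.sum_comm]
          exact Finset.sum_congr rfl (fun i _ => Finset.sum_comm)
      _ = ∑ i, ∑ j, (t i * t j) * (if i = j then c i else 0) := by
          refine Finset.sum_congr rfl (fun i _ => Finset.sum_congr rfl (fun j _ => ?_))
          rw [← Finset.mul_sum, hv i j]
      _ = ∑ i, c i * (t i * t i) := by
          refine Finset.sum_congr rfl (fun i _ => ?_)
          rw [Finset.sum_eq_single i]
          · simp; ring
          · intro j _ hji
            rw [if_neg (Ne.symm hji), mul_zero]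
          · intro h; exact absurd (mem_univ i) h
  have e3 : ∑ i, c i * (t i * t i) ≤ ∑ i, t i * t i :=
    Finset.sum_le_sum fun i _ => by
      have := mul_le_of_le_one_left (mul_self_nonneg (t i)) (hc i)
      linarith [this]
  have e4 : ∑ i, t i ^ 2 = ∑ i, t i * t i :=
    Finset.sum_congr rfl fun i _ => sq (t i) ▸ by ring
  rw [e0, e1, e2] at key
  rw [e4]
  linarith

/-- Expansion of the Frobenius inner product through rank-one decompositions. -/
lemma dotM_decomp {m n : ℕ} (P Q : Matrix (Fin m) (Fin n) ℝ)
    (s q : Fin n → ℝ) (u w : Fin n → Fin m → ℝ) (v z : Fin n → Fin n → ℝ)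
    (hP : ∀ a b, P a b = ∑ i, s i * (u i a * v i b))
    (hQ : ∀ a b, Q a b = ∑ i, q i * (w i a * z i b)) :
    ∑ a, ∑ b, P a b * Q a b
      = ∑ i, ∑ j, (s i * q j) * ((∑ a, u i a * w j a) * (∑ b, v i b * z j b)) := by
  have e1 : ∀ a b, P a b * Q a b
      = ∑ i, ∑ j, (s i * q j) * ((u i a * w j a) * (v i b * z j b)) := by
    intro a b
    rw [hP a b, hQ a b, Finset.sum_mul_sum]
    exact Finset.sum_congr rfl fun i _ => Finset.sum_congr rfl fun j _ => by ring
  calc ∑ a, ∑ b, P a b * Q a b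
      = ∑ a, ∑ b, ∑ i, ∑ j, (s i * q j) * ((u i a * w j a) * (v i b * z j b)) :=
        Finset.sum_congr rfl fun a _ => Finset.sum_congr rfl fun b _ => e1 a b
    _ = ∑ i, ∑ j, ∑ a, ∑ b, (s i * q j) * ((u i a * w j a) * (v i b * z j b)) := by
        calc ∑ a, ∑ b, ∑ i, ∑ j, (s i * q j) * ((u i a * w j a) * (v i b * z j b))
            = ∑ a, ∑ i, ∑ b, ∑ j, _ := Finset.sum_congr rfl fun a _ => Finset.sum_comm
          _ = ∑ i, ∑ a, ∑ b, ∑ j, _ := Finset.sum_comm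
          _ = ∑ i, ∑ a, ∑ j, ∑ b, _ :=
              Finset.sum_congr rfl fun i _ => Finset.sum_congr rfl fun a _ => Finset.sum_comm
          _ = ∑ i, ∑ j, ∑ a, ∑ b, _ :=
              Finset.sum_congr rfl fun i _ => Finset.sum_comm
    _ = ∑ i, ∑ j, (s i * q j) * ((∑ a, u i a * w j a) * (∑ b, v i b * z j b)) := by
        refine Finset.sum_congr rfl fun i _ => Finset.sum_congr rfl fun j _ => ?_
        rw [Finset.sum_mul_sum]
        simp only [Finset.mul_sum]
        try exact Finset.sum_congr rfl fun a _ => Finset.sum_congr rfl fun b _ => by ring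

/-- von Neumann-type bound through rank-one decompositions. -/
lemma vonNeumann_core {m n : ℕ} (s q : Fin n → ℝ)
    (hs : Antitone s) (hq : Antitone q) (hs0 : ∀ i, 0 ≤ s i) (hq0 : ∀ i, 0 ≤ q i)
    (u w : Fin n → Fin m → ℝ) (v z : Fin n → Fin n → ℝ)
    (cu cw cv cz : Fin n → ℝ)
    (hu : ∀ i j, ∑ a, u i a * u j a = if i = j then cu i else 0)
    (hw : ∀ i j, ∑ a, w i a * w j a = if i = j then cw i else 0)
    (hv : ∀ i j, ∑ b, v i b * v j b = if i = j then cv i else 0)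
    (hz : ∀ i j, ∑ b, z i b * z j b = if i = j then cz i else 0)
    (hcu : ∀ i, cu i ≤ 1) (hcw : ∀ i, cw i ≤ 1) (hcv : ∀ i, cv i ≤ 1) (hcz : ∀ i, cz i ≤ 1) :
    ∑ i, ∑ j, (s i * q j) * ((∑ a, u i a * w j a) * (∑ b, v i b * z j b))
      ≤ ∑ i, s i * q i := by
  set A : Fin n → Fin n → ℝ := fun i j => (∑ a, u i a * w j a) ^ 2 with hA
  set B : Fin n → Fin n → ℝ := fun i j => (∑ b, v i b * z j b) ^ 2 with hB
  have hArow : ∀ i, ∑ j, A i j ≤ 1 := by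
    intro i
    calc ∑ j, A i j ≤ ∑ a, u i a * u i a := bessel w cw hw hcw (u i)
      _ ≤ 1 := by rw [hu i i, if_pos rfl]; exact hcu i
  have hAcol : ∀ j, ∑ i, A i j ≤ 1 := by
    intro j
    have e : ∀ i, A i j = (∑ a, w j a * u i a) ^ 2 := by
      intro i; simp only [hA]; congr 1; exact Finset.sum_congr rfl fun a _ => mul_comm _ _
    simp only [e]
    calc ∑ i, (∑ a, w j a * u i a) ^ 2 ≤ ∑ a, w j a * w j a := bessel u cu hu hcu (w j)
      _ ≤ 1 := by rw [hw j j, if_pos rfl]; exact hcw j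
  have hBrow : ∀ i, ∑ j, B i j ≤ 1 := by
    intro i
    calc ∑ j, B i j ≤ ∑ b, v i b * v i b := bessel z cz hz hcz (v i)
      _ ≤ 1 := by rw [hv i i, if_pos rfl]; exact hcv i
  have hBcol : ∀ j, ∑ i, B i j ≤ 1 := by
    intro j
    have e : ∀ i, B i j = (∑ b, z j b * v i b) ^ 2 := by
      intro i; simp only [hB]; congr 1; exact Finset.sum_congr rfl fun b _ => mul_comm _ _
    simp only [e]
    calc ∑ i, (∑ b, z j b * v i b) ^ 2 ≤ ∑ b, z j b * z j b := bessel v cv hv hcv (z j)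
      _ ≤ 1 := by rw [hz j j, if_pos rfl]; exact hcz j
  have hAineq := substochastic_rearrangement s q hs hq hs0 hq0 A
    (fun i j => sq_nonneg _) hArow hAcol
  have hBineq := substochastic_rearrangement s q hs hq hs0 hq0 B
    (fun i j => sq_nonneg _) hBrow hBcol
  have per : ∀ i j, (s i * q j) * ((∑ a, u i a * w j a) * (∑ b, v i b * z j b))
      ≤ (1/2) * (A i j * (s i * q j)) + (1/2) * (B i j * (s i * q j)) := by
    intro i j
    set x := ∑ a, u i a * w j a
    set y := ∑ b, v i b * z j b
    have h1 : 0 ≤ s i * q j := mul_nonneg (hs0 i) (hq0 j)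
    have hxy : x * y ≤ (x^2 + y^2)/2 := by nlinarith [sq_nonneg (x - y)]
    calc (s i * q j) * (x * y) ≤ (s i * q j) * ((x^2 + y^2)/2) :=
          mul_le_mul_of_nonneg_left hxy h1
      _ = (1/2) * (x^2 * (s i * q j)) + (1/2) * (y^2 * (s i * q j)) := by ring
  calc ∑ i, ∑ j, (s i * q j) * ((∑ a, u i a * w j a) * (∑ b, v i b * z j b))
      ≤ ∑ i, ∑ j, ((1/2) * (A i j * (s i * q j)) + (1/2) * (B i j * (s i * q j))) :=
        Finset.sum_le_sum fun i _ => Finset.sum_le_sum fun j _ => per i j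
    _ = (1/2) * (∑ i, ∑ j, A i j * (s i * q j)) + (1/2) * (∑ i, ∑ j, B i j * (s i * q j)) := by
        rw [Finset.mul_sum, Finset.mul_sum, ← Finset.sum_add_distrib]
        refine Finset.sum_congr rfl fun i _ => ?_
        rw [Finset.mul_sum, Finset.mul_sum, ← Finset.sum_add_distrib]
    _ ≤ (1/2) * (∑ i, s i * q i) + (1/2) * (∑ i, s i * q i) :=
        add_le_add (mul_le_mul_of_nonneg_left hAineq (by norm_num))
          (mul_le_mul_of_nonneg_left hBineq (by norm_num))
    _ = ∑ i, s i * q i := by ring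

lemma decomp {m n : ℕ} (P : Matrix (Fin m) (Fin n) ℝ) :
    ∃ (u : Fin n → Fin m → ℝ) (v : Fin n → Fin n → ℝ),
      (∀ i j, ∑ b, v i b * v j b = if i = j then 1 else 0) ∧
      (∀ i j, ∑ a, u i a * u j a
        = if i = j then (if svalsDesc P i = 0 then 0 else 1) else 0) ∧
      (∀ a b, P a b = ∑ i, svalsDesc P i * (u i a * v i b)) := by
  have hH := Matrix.isHermitian_conjTranspose_mul_self P
  set W : Matrix (Fin n) (Fin n) ℝ := (hH.eigenvectorUnitary : Matrix (Fin n) (Fin n) ℝ) with hWdef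
  have hW1 : star W * W = 1 := Unitary.star_mul_self_of_mem hH.eigenvectorUnitary.2
  have hW2 : W * star W = 1 := Unitary.mul_star_self_of_mem hH.eigenvectorUnitary.2
  have hWcol : ∀ c d : Fin n, (∑ b, W b c * W b d) = if c = d then 1 else 0 := by
    intro c d
    have h2 : (star W * W) c d = (1 : Matrix (Fin n) (Fin n) ℝ) c d := by rw [hW1]
    simpa [Matrix.mul_apply, Matrix.star_apply, Matrix.one_apply] using h2
  have hGW : (Pᴴ * P) * W = W * Matrix.diagonal hH.eigenvalues := by
    have hst := hH.spectral_theorem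
    rw [Unitary.conjStarAlgAut_apply] at hst
    have hdiag : Matrix.diagonal (RCLike.ofReal ∘ hH.eigenvalues)
        = Matrix.diagonal hH.eigenvalues := by
      congr 1
    rw [← hWdef, hdiag] at hst
    calc (Pᴴ * P) * W = (W * Matrix.diagonal hH.eigenvalues * star W) * W := by rw [← hst]
      _ = W * Matrix.diagonal hH.eigenvalues * (star W * W) := by rw [mul_assoc]
      _ = W * Matrix.diagonal hH.eigenvalues := by rw [hW1, mul_one]
  have hGv : ∀ (c : Fin n) (a : Fin n),
      (∑ b, (Pᴴ * P) a b * W b c) = hH.eigenvalues c * W a c := by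
    intro c a
    have h2 : ((Pᴴ * P) * W) a c = (W * Matrix.diagonal hH.eigenvalues) a c := by rw [hGW]
    rw [Matrix.mul_apply, Matrix.mul_diagonal] at h2
    rw [h2]; ring
  have hGentry : ∀ b b' : Fin n, (Pᴴ * P) b b' = ∑ a, P a b * P a b' := by
    intro b b'
    rw [Matrix.mul_apply]
    exact Finset.sum_congr rfl fun a _ => by simp [Matrix.conjTranspose_apply]
  set π : Equiv.Perm (Fin n) := Fin.revPerm.trans (Tuple.sort (svals P)) with hπdef
  set sp := svalsDesc P with hspdef
  have hsp : ∀ i, sp i = Real.sqrt (hH.eigenvalues (π i)) := fun i => rfl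
  have heig0 : ∀ j, 0 ≤ hH.eigenvalues j := fun j =>
    (Matrix.posSemidef_conjTranspose_mul_self P).eigenvalues_nonneg j
  have hsp_sq : ∀ i, sp i ^ 2 = hH.eigenvalues (π i) := fun i => by
    rw [hsp i, Real.sq_sqrt (heig0 (π i))]
  have hsp0 : ∀ i, 0 ≤ sp i := fun i => (hsp i) ▸ Real.sqrt_nonneg _
  set v : Fin n → Fin n → ℝ := fun i b => W b (π i) with hvdef
  have hvv : ∀ i j, (∑ b, v i b * v j b) = if i = j then 1 else 0 := by
    intro i j
    rw [hWcol (π i) (π j)]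
    congr 1
    simp [Equiv.apply_eq_iff_eq]
  have hPv : ∀ i j, (∑ a, (∑ b, P a b * v i b) * (∑ b, P a b * v j b))
      = if i = j then hH.eigenvalues (π i) else 0 := by
    intro i j
    calc ∑ a, (∑ b, P a b * v i b) * (∑ b, P a b * v j b)
        = ∑ a, ∑ b, ∑ b', (v i b * v j b') * (P a b * P a b') := by
          refine Finset.sum_congr rfl fun a _ => ?_
          rw [Finset.sum_mul_sum]
          exact Finset.sum_congr rfl fun b _ => Finset.sum_congr rfl fun b' _ => by ring
      _ = ∑ b, ∑ b', ∑ a, (v i b * v j b') * (P a b * P a b') := by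
          rw [Finset.sum_comm]
          exact Finset.sum_congr rfl fun b _ => Finset.sum_comm
      _ = ∑ b, ∑ b', (v i b * v j b') * (Pᴴ * P) b b' := by
          refine Finset.sum_congr rfl fun b _ => Finset.sum_congr rfl fun b' _ => ?_
          rw [← Finset.mul_sum, hGentry b b']
      _ = ∑ b, v i b * (∑ b', (Pᴴ * P) b b' * v j b') := by
          refine Finset.sum_congr rfl fun b _ => ?_
          rw [Finset.mul_sum]
          exact Finset.sum_congr rfl fun b' _ => by ring
      _ = ∑ b, v i b * (hH.eigenvalues (π j) * v j b) := by
          refine Finset.sum_congr rfl fun b _ => ?_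
          rw [hGv (π j) b]
      _ = hH.eigenvalues (π j) * ∑ b, v i b * v j b := by
          rw [Finset.mul_sum]
          exact Finset.sum_congr rfl fun b _ => by ring
      _ = if i = j then hH.eigenvalues (π i) else 0 := by
          rw [hvv i j]
          by_cases h : i = j
          · subst h; simp
          · simp [h]
  set u : Fin n → Fin m → ℝ :=
    fun i a => if sp i = 0 then 0 else (sp i)⁻¹ * ∑ b, P a b * v i b with hudef
  have hPv0 : ∀ i, sp i = 0 → ∀ a, (∑ b, P a b * v i b) = 0 := by
    intro i hi a
    have h := hPv i i
    rw [if_pos rfl, ← hsp_sq i, hi] at h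
    have h0 : (∑ a, (∑ b, P a b * v i b) * (∑ b, P a b * v i b)) = 0 := by
      rw [h]; norm_num
    have := (Finset.sum_eq_zero_iff_of_nonneg
      (fun a _ => mul_self_nonneg (∑ b, P a b * v i b))).mp h0 a (mem_univ a)
    exact mul_self_eq_zero.mp this
  have hspu : ∀ i a, sp i * u i a = ∑ b, P a b * v i b := by
    intro i a
    by_cases h : sp i = 0
    · simp only [hudef, if_pos h, mul_zero, h]
      exact (hPv0 i h a).symm
    · simp only [hudef, if_neg h]
      field_simp
  have huu : ∀ i j, (∑ a, u i a * u j a)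
      = if i = j then (if sp i = 0 then 0 else 1) else 0 := by
    intro i j
    by_cases hi : sp i = 0
    · have : ∀ a, u i a = 0 := fun a => by simp [hudef, hi]
      simp only [this, zero_mul, Finset.sum_const_zero]
      by_cases h : i = j <;> simp [h, hi]
      · rw [← h]; exact hi
    · by_cases hj : sp j = 0
      · have : ∀ a, u j a = 0 := fun a => by simp [hudef, hj]
        simp only [this, mul_zero, Finset.sum_const_zero]
        have hij : i ≠ j := fun h => hi (h ▸ hj)
        simp [hij]
      · have e : ∀ a, u i a * u j a
            = ((sp i)⁻¹ * (sp j)⁻¹) * ((∑ b, P a b * v i b) * (∑ b, P a b * v j b)) := by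
          intro a; simp only [hudef, if_neg hi, if_neg hj]; ring
        rw [Finset.sum_congr rfl fun a _ => e a, ← Finset.mul_sum, hPv i j]
        by_cases h : i = j
        · subst h
          rw [if_pos rfl, if_pos rfl, if_neg hi, ← hsp_sq i]
          field_simp
        · simp [h]
  refine ⟨u, v, hvv, huu, ?_⟩
  -- decomposition identity
  set X : Matrix (Fin m) (Fin n) ℝ := Matrix.of (fun a b => ∑ i, sp i * (u i a * v i b)) with hXdef
  have hXW : X * W = P * W := by
    ext a c
    rw [Matrix.mul_apply, Matrix.mul_apply]
    set i0 := π.symm c with hi0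
    have hc : π i0 = c := π.apply_symm_apply c
    calc ∑ b, X a b * W b c
        = ∑ b, ∑ i, (sp i * u i a) * (v i b * W b c) := by
          refine Finset.sum_congr rfl fun b _ => ?_
          simp only [hXdef, Matrix.of_apply]
          rw [Finset.sum_mul]
          exact Finset.sum_congr rfl fun i _ => by ring
      _ = ∑ i, (sp i * u i a) * (∑ b, v i b * W b c) := by
          rw [Finset.sum_comm]
          exact Finset.sum_congr rfl fun i _ => by rw [Finset.mul_sum]
      _ = ∑ i, (sp i * u i a) * (if i = i0 then 1 else 0) := by
          refine Finset.sum_congr rfl fun i _ => ?_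
          rw [hWcol (π i) c]
          congr 1
          by_cases h : i = i0
          · simp [h, hc]
          · have : π i ≠ c := fun hh => h (by rw [← hc] at hh; exact π.injective hh)
            simp [h, this]
      _ = ∑ i, (if i = i0 then sp i * u i a else 0) := by
          refine Finset.sum_congr rfl fun i _ => ?_
          by_cases h : i = i0 <;> simp [h]
      _ = sp i0 * u i0 a := by
          rw [Finset.sum_ite_eq' univ i0 (fun i => sp i * u i a)]
          simp
      _ = ∑ b, P a b * W b c := by
          rw [hspu i0 a]
          refine Finset.sum_congr rfl fun b _ => ?_
          rw [hvdef]
          simp [hc]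
  have hXP : X = P := by
    calc X = X * (W * star W) := by rw [hW2, Matrix.mul_one]
      _ = (X * W) * star W := by rw [Matrix.mul_assoc]
      _ = (P * W) * star W := by rw [hXW]
      _ = P * (W * star W) := by rw [Matrix.mul_assoc]
      _ = P := by rw [hW2, Matrix.mul_one]
  intro a b
  have := congrFun (congrFun hXP a) b
  simpa [hXdef] using this.symm

lemma char_det {k : ℕ} (A : Matrix (Fin k) (Fin k) ℝ) (W : Matrix (Fin k) (Fin k) ℝ)
    (d : Fin k → ℝ) (hW : Wᵀ * W = 1) (hAd : A = W * Matrix.diagonal d * Wᵀ) (x : ℝ) :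
    Polynomial.eval x (∏ i, (Polynomial.X - Polynomial.C (d i)))
      = Matrix.det (x • (1 : Matrix (Fin k) (Fin k) ℝ) - A) := by
  have hWWT : W * Wᵀ = 1 := mul_eq_one_comm.mp hW
  have hdet : W.det * W.det = 1 := by
    have h := congrArg Matrix.det hW
    rwa [Matrix.det_mul, Matrix.det_transpose, Matrix.det_one] at h
  have h1 : x • (1 : Matrix (Fin k) (Fin k) ℝ) - A
      = W * (x • (1 : Matrix (Fin k) (Fin k) ℝ) - Matrix.diagonal d) * Wᵀ := by
    rw [hAd, Matrix.mul_sub, Matrix.sub_mul]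
    congr 1
    rw [Matrix.mul_smul, Matrix.smul_mul, Matrix.mul_one, hWWT]
  have h2 : (x • (1 : Matrix (Fin k) (Fin k) ℝ) - Matrix.diagonal d)
      = Matrix.diagonal (fun i => x - d i) := by
    ext i j
    by_cases h : i = j <;>
      simp [Matrix.diagonal_apply, Matrix.one_apply, h, Matrix.sub_apply, Matrix.smul_apply]
  rw [h1, h2, Matrix.det_mul, Matrix.det_mul, Matrix.det_transpose, Matrix.det_diagonal]
  rw [Polynomial.eval_prod]
  simp only [Polynomial.eval_sub, Polynomial.eval_X, Polynomial.eval_C]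
  rw [mul_right_comm, hdet, one_mul]

end PSVT

namespace PSVT

lemma eig_multiset {k : ℕ} {A : Matrix (Fin k) (Fin k) ℝ} (hA : A.IsHermitian)
    (W : Matrix (Fin k) (Fin k) ℝ) (d : Fin k → ℝ)
    (hW : Wᵀ * W = 1) (hAd : A = W * Matrix.diagonal d * Wᵀ) :
    Multiset.map hA.eigenvalues Finset.univ.val = Multiset.map d Finset.univ.val := by
  set U : Matrix (Fin k) (Fin k) ℝ := (hA.eigenvectorUnitary : Matrix (Fin k) (Fin k) ℝ)
    with hUdef
  have hsU : star U = Uᵀ := by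
    rw [Matrix.star_eq_conjTranspose, Matrix.conjTranspose_eq_transpose_of_trivial]
  have hU : Uᵀ * U = 1 := by
    rw [← hsU]; exact Unitary.star_mul_self_of_mem hA.eigenvectorUnitary.2
  have hAU : A = U * Matrix.diagonal hA.eigenvalues * Uᵀ := by
    have hst := hA.spectral_theorem
    rw [Unitary.conjStarAlgAut_apply] at hst
    have hdiag : Matrix.diagonal (RCLike.ofReal ∘ hA.eigenvalues)
        = Matrix.diagonal hA.eigenvalues := by congr 1
    rw [← hUdef, hdiag, hsU] at hst
    exact hst
  have hfun : (∏ i, (Polynomial.X - Polynomial.C (hA.eigenvalues i)))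
      = ∏ i, (Polynomial.X - Polynomial.C (d i)) :=
    Polynomial.funext fun x => by rw [char_det A U hA.eigenvalues hU hAU x,
      char_det A W d hW hAd x]
  have hroots := congrArg Polynomial.roots hfun
  have conv : ∀ (f : Fin k → ℝ), (∏ i, (Polynomial.X - Polynomial.C (f i))).roots
      = Multiset.map f Finset.univ.val := by
    intro f
    rw [Finset.prod_eq_multiset_prod]
    have : Multiset.map (fun i => Polynomial.X - Polynomial.C (f i)) Finset.univ.val
        = Multiset.map (fun a => Polynomial.X - Polynomial.C a)
            (Multiset.map f Finset.univ.val) := by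
      rw [Multiset.map_map]; rfl
    rw [this, Polynomial.roots_multiset_prod_X_sub_C]
  rw [conv hA.eigenvalues, conv d] at hroots
  exact hroots

lemma sortedDesc_unique {k : ℕ} (f g : Fin k → ℝ)
    (hmul : Multiset.map f Finset.univ.val = Multiset.map g Finset.univ.val)
    (hg : Antitone g) (i : Fin k) :
    (f ∘ Tuple.sort f) i.rev = g i := by
  set F : Fin k → ℝ := f ∘ Tuple.sort f with hF
  set G : Fin k → ℝ := fun i => g i.rev with hG
  have hFmono : Monotone F := Tuple.monotone_sort f
  have hGmono : Monotone G := fun i j h => hg (by simpa [Fin.rev_le_rev] using h)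
  have huniv : ∀ (e : Equiv.Perm (Fin k)) (h : Fin k → ℝ),
      Multiset.map (fun i => h (e i)) Finset.univ.val = Multiset.map h Finset.univ.val := by
    intro e h
    have h1 : Multiset.map (⇑e) Finset.univ.val = Finset.univ.val := by
      have h2 := Finset.map_univ_equiv e
      calc Multiset.map (⇑e) Finset.univ.val = (Finset.univ.map e.toEmbedding).val := by
            rw [Finset.map_val]; rfl
        _ = Finset.univ.val := by rw [h2]
    calc Multiset.map (fun i => h (e i)) Finset.univ.val
        = Multiset.map h (Multiset.map (⇑e) Finset.univ.val) := by
          rw [Multiset.map_map]; rfl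
      _ = Multiset.map h Finset.univ.val := by rw [h1]
  have hmulFG : Multiset.map F Finset.univ.val = Multiset.map G Finset.univ.val := by
    calc Multiset.map F Finset.univ.val
        = Multiset.map f Finset.univ.val := huniv (Tuple.sort f) f
      _ = Multiset.map g Finset.univ.val := hmul
      _ = Multiset.map G Finset.univ.val := (huniv (Fin.revPerm) g).symm
  -- convert to lists
  have hlist : ∀ (h : Fin k → ℝ),
      Multiset.map h Finset.univ.val = ((List.ofFn h : List ℝ) : Multiset ℝ) := by
    intro h
    rw [List.ofFn_eq_map, Fin.univ_def]
    rfl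
  rw [hlist F, hlist G, Multiset.coe_eq_coe] at hmulFG
  have hsF : List.Pairwise (· ≤ ·) (List.ofFn F) :=
    List.pairwise_ofFn.mpr fun i j h => hFmono h.le
  have hsG : List.Pairwise (· ≤ ·) (List.ofFn G) :=
    List.pairwise_ofFn.mpr fun i j h => hGmono h.le
  have := hmulFG.eq_of_pairwise' hsF hsG
  have hFG : F = G := List.ofFn_inj.mp this
  calc (f ∘ Tuple.sort f) i.rev = F i.rev := rfl
    _ = G i.rev := by rw [hFG]
    _ = g i := by rw [hG]; simp [Fin.rev_rev]

lemma svalsDesc_eq {m n : ℕ} (A : Matrix (Fin m) (Fin n) ℝ) (W : Matrix (Fin n) (Fin n) ℝ)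
    (hW : Wᵀ * W = 1) (g : Fin n → ℝ) (hg : Antitone g) (hg0 : ∀ i, 0 ≤ g i)
    (h : Aᴴ * A = W * Matrix.diagonal (fun i => g i ^ 2) * Wᵀ) :
    ∀ i, svalsDesc A i = g i := by
  have hmul := eig_multiset (Matrix.isHermitian_conjTranspose_mul_self A) W _ hW h
  have h2 : Multiset.map (svals A) Finset.univ.val = Multiset.map g Finset.univ.val := by
    calc Multiset.map (svals A) Finset.univ.val
        = Multiset.map (fun x => Real.sqrt x)
            (Multiset.map (Matrix.isHermitian_conjTranspose_mul_self A).eigenvalues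
              Finset.univ.val) := by rw [Multiset.map_map]; rfl
      _ = Multiset.map (fun x => Real.sqrt x)
            (Multiset.map (fun i => g i ^ 2) Finset.univ.val) := by rw [hmul]
      _ = Multiset.map g Finset.univ.val := by
          rw [Multiset.map_map]
          refine Multiset.map_congr rfl fun i _ => ?_
          exact Real.sqrt_sq (hg0 i)
  intro i
  exact sortedDesc_unique (svals A) g h2 hg i


lemma sum_coe_eq {m : ℕ} (d : ℕ) (f : Fin m → ℝ) :
    ∑ c : Fin m, (if (c : ℕ) = d then f c else 0) = if h : d < m then f ⟨d, h⟩ else 0 := by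
  split
  · next h =>
    rw [Finset.sum_eq_single ⟨d, h⟩]
    · simp
    · intro c _ hc
      rw [if_neg]
      intro hcd
      exact hc (Fin.ext hcd)
    · intro hmem; exact absurd (mem_univ _) hmem
  · next h =>
    apply Finset.sum_eq_zero
    intro c _
    rw [if_neg]
    omega

lemma frobSq_conj {m n : ℕ} (U : Matrix (Fin m) (Fin m) ℝ) (V : Matrix (Fin n) (Fin n) ℝ)
    (hU : Uᵀ * U = 1) (hV : Vᵀ * V = 1) (A : Matrix (Fin m) (Fin n) ℝ) :
    frobSq (U * A * Vᵀ) = frobSq A := by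
  have tr_eq : ∀ (X : Matrix (Fin m) (Fin n) ℝ), frobSq X = Matrix.trace (Xᵀ * X) := by
    intro X
    unfold frobSq
    rw [Matrix.trace]
    rw [Finset.sum_comm]
    refine Finset.sum_congr rfl fun b _ => ?_
    rw [Matrix.diag]
    rw [Matrix.mul_apply]
    exact Finset.sum_congr rfl fun a _ => by rw [Matrix.transpose_apply]; ring
  rw [tr_eq, tr_eq]
  have h1 : (U * A * Vᵀ)ᵀ * (U * A * Vᵀ) = V * (Aᵀ * A) * Vᵀ := by
    rw [Matrix.transpose_mul, Matrix.transpose_mul, Matrix.transpose_transpose]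
    calc Vᵀᵀ * (Aᵀ * Uᵀ) * (U * A * Vᵀ)
        = V * (Aᵀ * ((Uᵀ * U) * (A * Vᵀ))) := by
          rw [Matrix.transpose_transpose]
          rw [Matrix.mul_assoc U A Vᵀ, Matrix.mul_assoc, Matrix.mul_assoc, Matrix.mul_assoc]
      _ = V * (Aᵀ * A) * Vᵀ := by
          rw [hU, Matrix.one_mul, ← Matrix.mul_assoc, ← Matrix.mul_assoc,
            Matrix.mul_assoc V Aᵀ A]
  rw [h1]
  rw [Matrix.trace_mul_comm (V * (Aᵀ * A)) Vᵀ, ← Matrix.mul_assoc, hV, Matrix.one_mul]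

lemma scalar_opt (τ s q : ℝ) (hτ : 0 < τ) (hs : 0 ≤ s) (hq : 0 ≤ q) :
    τ * max (q - τ) 0 + (1/2) * (min q τ)^2 ≤ τ * s + (1/2) * (s - q)^2 := by
  rcases le_total q τ with h | h
  · rw [max_eq_right (by linarith), min_eq_left h]
    nlinarith [mul_nonneg hs (sub_nonneg.mpr h)]
  · rw [max_eq_left (by linarith), min_eq_right h]
    nlinarith [sq_nonneg (q - s - τ)]

lemma sub_max_eq_min (s t : ℝ) : s - max (s - t) 0 = min s t := by
  rcases le_total s t with h | h
  · rw [max_eq_right (by linarith), min_eq_left h]; ring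
  · rw [max_eq_left (by linarith), min_eq_right h]; ring

end PSVT

end PSVTAux
/-- Partial singular value thresholding (Oh et al.): given an SVD
Q = U (Σ₁ + Σ₂) Vᵀ where Σ₁ carries the leading N singular values and Σ₂ the
rest (singular values sorted nonincreasingly), the matrix
P_{N,τ}[Q] = U (Σ₁ + S_τ[Σ₂]) Vᵀ minimizes
P ↦ τ‖P‖_{r=N} + (1/2)‖P − Q‖_F². -/
theorem stmt_3 (m n N : ℕ) (τ : ℝ) (hτ : 0 < τ)
    (σ : Fin n → ℝ) (hσ : Antitone σ) (hσ0 : ∀ j, 0 ≤ σ j)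
    (Q : Matrix (Fin m) (Fin n) ℝ)
    (U : Matrix (Fin m) (Fin m) ℝ) (V : Matrix (Fin n) (Fin n) ℝ)
    (hU : Uᵀ * U = 1) (hV : Vᵀ * V = 1)
    (Sig1 Sig2 : Matrix (Fin m) (Fin n) ℝ)
    (hSig1 : Sig1 = Matrix.of fun (i : Fin m) (j : Fin n) =>
      if (i : ℕ) = (j : ℕ) ∧ (j : ℕ) < N then σ j else 0)
    (hSig2 : Sig2 = Matrix.of fun (i : Fin m) (j : Fin n) =>
      if (i : ℕ) = (j : ℕ) ∧ N ≤ (j : ℕ) then σ j else 0)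
    (hQ : Q = U * (Sig1 + Sig2) * Vᵀ) :
    ∀ P : Matrix (Fin m) (Fin n) ℝ,
      τ * partialSumNorm N
          (U * (Sig1 + Matrix.of fun i j => softThresh τ (Sig2 i j)) * Vᵀ) +
        (1 / 2) * frobSq
          (U * (Sig1 + Matrix.of fun i j => softThresh τ (Sig2 i j)) * Vᵀ - Q) ≤
      τ * partialSumNorm N P + (1 / 2) * frobSq (P - Q) := by
  intro P
  classical
  open Finset in
  set B : Matrix (Fin m) (Fin n) ℝ :=
    Sig1 + Matrix.of fun i j => softThresh τ (Sig2 i j) with hBdef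
  set dd : Fin n → ℝ := fun j => if (j : ℕ) < N then σ j else max (σ j - τ) 0 with hdd_def
  have hdd_app : ∀ j, dd j = if (j : ℕ) < N then σ j else max (σ j - τ) 0 := fun j => rfl
  set d' : Fin n → ℝ := fun j => if (j : ℕ) < m then dd j else 0 with hd'_def
  have hd'_app : ∀ j, d' j = if (j : ℕ) < m then dd j else 0 := fun j => rfl
  set q' : Fin n → ℝ := fun j => if (j : ℕ) < m then σ j else 0 with hq'_def
  have hq'_app : ∀ j, q' j = if (j : ℕ) < m then σ j else 0 := fun j => rfl
  -- nonnegativity and monotonicity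
  have hdd0 : ∀ j, 0 ≤ dd j := by
    intro j; rw [hdd_app]; split
    · exact hσ0 j
    · exact le_max_right _ _
  have hddA : Antitone dd := by
    intro i j hij
    have hijn : (i : ℕ) ≤ (j : ℕ) := hij
    rw [hdd_app, hdd_app]
    by_cases hiN : (i : ℕ) < N
    · by_cases hjN : (j : ℕ) < N
      · simpa [hiN, hjN] using hσ hij
      · rw [if_pos hiN, if_neg hjN]
        refine max_le ?_ (hσ0 i)
        have := hσ hij
        linarith
    · have hjN : ¬ (j : ℕ) < N := by omega
      rw [if_neg hiN, if_neg hjN]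
      exact max_le_max (by have := hσ hij; linarith) le_rfl
  have hd'0 : ∀ j, 0 ≤ d' j := by
    intro j; rw [hd'_app]; split
    · exact hdd0 j
    · exact le_rfl
  have hd'A : Antitone d' := by
    intro i j hij
    rw [hd'_app, hd'_app]
    by_cases hjm : (j : ℕ) < m
    · have him : (i : ℕ) < m := by have : (i:ℕ) ≤ (j:ℕ) := hij; omega
      rw [if_pos hjm, if_pos him]
      exact hddA hij
    · rw [if_neg hjm]
      split
      · exact hdd0 i
      · exact le_rfl
  have hq'0 : ∀ j, 0 ≤ q' j := by
    intro j; rw [hq'_app]; split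
    · exact hσ0 j
    · exact le_rfl
  have hq'A : Antitone q' := by
    intro i j hij
    rw [hq'_app, hq'_app]
    by_cases hjm : (j : ℕ) < m
    · have him : (i : ℕ) < m := by have : (i:ℕ) ≤ (j:ℕ) := hij; omega
      rw [if_pos hjm, if_pos him]
      exact hσ hij
    · rw [if_neg hjm]
      split
      · exact hσ0 i
      · exact le_rfl
  -- entry computations
  have hBent : ∀ (a : Fin m) (b : Fin n), B a b = if (a : ℕ) = (b : ℕ) then dd b else 0 := by
    intro a b
    have : B a b = Sig1 a b + softThresh τ (Sig2 a b) := rfl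
    rw [this, hSig1, hSig2, hdd_app]
    simp only [Matrix.of_apply]
    by_cases hab : (a : ℕ) = (b : ℕ)
    · by_cases hbN : (b : ℕ) < N
      · rw [if_pos ⟨hab, hbN⟩, if_neg (by omega), if_pos hab, if_pos hbN]
        unfold softThresh
        simp [Real.sign_zero]
      · rw [if_neg (by tauto), if_pos ⟨hab, by omega⟩, if_pos hab, if_neg hbN]
        unfold softThresh
        rcases (hσ0 b).lt_or_eq with h | h
        · rw [Real.sign_of_pos h, abs_of_pos h, one_mul, zero_add]
        · rw [← h, Real.sign_zero, zero_mul, zero_add]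
          rw [max_eq_right (by linarith)]
    · rw [if_neg (by tauto), if_neg (by tauto), if_neg hab]
      unfold softThresh
      simp [Real.sign_zero]
  have hSent : ∀ (a : Fin m) (b : Fin n),
      (Sig1 + Sig2) a b = if (a : ℕ) = (b : ℕ) then σ b else 0 := by
    intro a b
    have : (Sig1 + Sig2) a b = Sig1 a b + Sig2 a b := rfl
    rw [this, hSig1, hSig2]
    simp only [Matrix.of_apply]
    by_cases hab : (a : ℕ) = (b : ℕ)
    · by_cases hbN : (b : ℕ) < N
      · rw [if_pos ⟨hab, hbN⟩, if_neg (by omega), if_pos hab, add_zero]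
      · rw [if_neg (by tauto), if_pos ⟨hab, by omega⟩, if_pos hab, zero_add]
    · rw [if_neg (by tauto), if_neg (by tauto), if_neg hab, add_zero]
  -- diagonal form of Bᵀ * B
  have hBtB : Bᵀ * B = Matrix.diagonal (fun j => d' j ^ 2) := by
    ext c e
    rw [Matrix.mul_apply]
    have e1 : ∀ a : Fin m, Bᵀ c a * B a e
        = if (a : ℕ) = (c : ℕ) then (if (a : ℕ) = (e : ℕ) then dd c * dd e else 0) else 0 := by
      intro a
      rw [Matrix.transpose_apply, hBent a c, hBent a e]
      by_cases h1 : (a : ℕ) = (c : ℕ) <;> by_cases h2 : (a : ℕ) = (e : ℕ) <;>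
        simp [h1, h2]
    rw [Finset.sum_congr rfl fun a _ => e1 a]
    by_cases hce : c = e
    · subst hce
      have e2 : ∀ a : Fin m,
          (if (a : ℕ) = (c : ℕ) then (if (a : ℕ) = (c : ℕ) then dd c * dd c else 0) else 0)
          = (if (a : ℕ) = (c : ℕ) then dd c * dd c else 0) := by
        intro a; by_cases h : (a : ℕ) = (c : ℕ) <;> simp [h]
      rw [Finset.sum_congr rfl fun a _ => e2 a, PSVT.sum_coe_eq]
      rw [Matrix.diagonal_apply_eq, hd'_app]
      by_cases h : (c : ℕ) < m
      · rw [dif_pos h, if_pos h]; ring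
      · rw [dif_neg h, if_neg h]; ring
    · rw [Matrix.diagonal_apply_ne _ hce]
      apply Finset.sum_eq_zero
      intro a _
      by_cases h1 : (a : ℕ) = (c : ℕ)
      · rw [if_pos h1, if_neg]
        intro h2
        exact hce (Fin.ext (h1.symm.trans h2))
      · rw [if_neg h1]
  -- conjugated Gram matrix
  have hMtM : (U * B * Vᵀ)ᴴ * (U * B * Vᵀ) = V * Matrix.diagonal (fun j => d' j ^ 2) * Vᵀ := by
    rw [Matrix.conjTranspose_eq_transpose_of_trivial]
    rw [Matrix.transpose_mul, Matrix.transpose_mul, Matrix.transpose_transpose]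
    calc V * (Bᵀ * Uᵀ) * (U * B * Vᵀ)
        = V * (Bᵀ * ((Uᵀ * U) * (B * Vᵀ))) := by
          rw [Matrix.mul_assoc U B Vᵀ, Matrix.mul_assoc, Matrix.mul_assoc, Matrix.mul_assoc]
      _ = V * (Bᵀ * B) * Vᵀ := by
          rw [hU, Matrix.one_mul, ← Matrix.mul_assoc, ← Matrix.mul_assoc,
            Matrix.mul_assoc V Bᵀ B]
      _ = V * Matrix.diagonal (fun j => d' j ^ 2) * Vᵀ := by rw [hBtB]
  -- singular values of the candidate minimizer
  have hsvalsM : ∀ i, svalsDesc (U * B * Vᵀ) i = d' i :=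
    PSVT.svalsDesc_eq (U * B * Vᵀ) V hV d' hd'A hd'0 hMtM
  have hLHS1 : partialSumNorm N (U * B * Vᵀ)
      = ∑ i ∈ Finset.univ.filter (fun i : Fin n => N ≤ (i : ℕ)), d' i := by
    unfold partialSumNorm
    exact Finset.sum_congr rfl fun i _ => hsvalsM i
  -- Frobenius distance of the candidate minimizer
  have hMQ : U * B * Vᵀ - Q = U * (B - (Sig1 + Sig2)) * Vᵀ := by
    rw [hQ, Matrix.mul_sub, Matrix.sub_mul]
  have hLHS2 : frobSq (U * B * Vᵀ - Q)
      = ∑ j : Fin n, (if (j : ℕ) < m then (σ j - dd j) ^ 2 else 0) := by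
    rw [hMQ, PSVT.frobSq_conj U V hU hV]
    unfold frobSq
    rw [Finset.sum_comm]
    refine Finset.sum_congr rfl fun j _ => ?_
    have e1 : ∀ a : Fin m, ((B - (Sig1 + Sig2)) a j) ^ 2
        = if (a : ℕ) = (j : ℕ) then (σ j - dd j) ^ 2 else 0 := by
      intro a
      rw [Matrix.sub_apply, hBent a j, hSent a j]
      by_cases h : (a : ℕ) = (j : ℕ)
      · rw [if_pos h, if_pos h, if_pos h]; ring
      · rw [if_neg h, if_neg h, if_neg h]; ring
    rw [Finset.sum_congr rfl fun a _ => e1 a, PSVT.sum_coe_eq]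
    by_cases h : (j : ℕ) < m
    · rw [dif_pos h, if_pos h]
    · rw [dif_neg h, if_neg h]
  have hLHS2' : ∑ j : Fin n, (if (j : ℕ) < m then (σ j - dd j) ^ 2 else 0)
      = ∑ j ∈ Finset.univ.filter (fun i : Fin n => N ≤ (i : ℕ)),
          (if (j : ℕ) < m then (σ j - dd j) ^ 2 else 0) := by
    symm
    apply Finset.sum_filter_of_ne
    intro j _ hne
    by_contra hjN
    have hjN' : (j : ℕ) < N := by omega
    have : dd j = σ j := by rw [hdd_app, if_pos hjN']
    rw [this] at hne
    simp at hne
  -- decomposition of P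
  obtain ⟨u, v, hvv, huu, hPdec⟩ := PSVT.decomp P
  have hsp0 : ∀ i, 0 ≤ svalsDesc P i := fun i => Real.sqrt_nonneg _
  have hspA : Antitone (svalsDesc P) := by
    intro i j hij
    exact Tuple.monotone_sort (svals P) (Fin.rev_le_rev.mpr hij)
  -- decomposition of Q from the given SVD
  set w : Fin n → Fin m → ℝ :=
    fun j a => if h : (j : ℕ) < m then U a ⟨(j : ℕ), h⟩ else 0 with hw_def
  set z : Fin n → Fin n → ℝ := fun j b => V b j with hz_def
  have hUcol : ∀ c e : Fin m, (∑ a, U a c * U a e) = if c = e then 1 else 0 := by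
    intro c e
    have h2 : (Uᵀ * U) c e = (1 : Matrix (Fin m) (Fin m) ℝ) c e := by rw [hU]
    simpa [Matrix.mul_apply, Matrix.transpose_apply, Matrix.one_apply] using h2
  have hVcol : ∀ c e : Fin n, (∑ b, V b c * V b e) = if c = e then 1 else 0 := by
    intro c e
    have h2 : (Vᵀ * V) c e = (1 : Matrix (Fin n) (Fin n) ℝ) c e := by rw [hV]
    simpa [Matrix.mul_apply, Matrix.transpose_apply, Matrix.one_apply] using h2
  have hzz : ∀ i j, (∑ b, z i b * z j b) = if i = j then 1 else 0 := fun i j => hVcol i j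
  have hww : ∀ i j, (∑ a, w i a * w j a)
      = if i = j then (if (i : ℕ) < m then 1 else 0) else 0 := by
    intro i j
    by_cases hi : (i : ℕ) < m
    · by_cases hj : (j : ℕ) < m
      · simp only [hw_def, dif_pos hi, dif_pos hj]
        rw [hUcol ⟨(i : ℕ), hi⟩ ⟨(j : ℕ), hj⟩]
        by_cases h : i = j
        · subst h; simp [hi]
        · have hne : (⟨(i : ℕ), hi⟩ : Fin m) ≠ ⟨(j : ℕ), hj⟩ := by
            intro hh
            have hval : (i : ℕ) = (j : ℕ) := by injection hh
            exact h (Fin.ext hval)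
          rw [if_neg hne, if_neg h]
      · have hij : i ≠ j := by intro h; subst h; exact hj hi
        have hz0 : ∀ a, w j a = 0 := fun a => by simp [hw_def, dif_neg hj]
        simp [hz0, hij]
    · have hz0 : ∀ a, w i a = 0 := fun a => by simp [hw_def, dif_neg hi]
      simp [hz0, hi]
  have hQdec : ∀ a b, Q a b = ∑ j, q' j * (w j a * z j b) := by
    intro a b
    rw [hQ]
    rw [Matrix.mul_apply]
    refine Finset.sum_congr rfl fun d _ => ?_
    have e1 : (U * (Sig1 + Sig2)) a d
        = if h : (d : ℕ) < m then U a ⟨(d : ℕ), h⟩ * σ d else 0 := by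
      rw [Matrix.mul_apply]
      have e2 : ∀ c : Fin m, U a c * (Sig1 + Sig2) c d
          = if (c : ℕ) = (d : ℕ) then U a c * σ d else 0 := by
        intro c
        rw [hSent c d]
        by_cases h : (c : ℕ) = (d : ℕ) <;> simp [h]
      rw [Finset.sum_congr rfl fun c _ => e2 c, PSVT.sum_coe_eq]
    rw [e1, Matrix.transpose_apply]
    by_cases h : (d : ℕ) < m
    · rw [dif_pos h]
      simp only [hq'_def, hw_def, hz_def, dif_pos h, if_pos h]
      ring
    · rw [dif_neg h]
      simp only [hq'_def, hw_def, hz_def, dif_neg h, if_neg h]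
      ring
  -- von Neumann inequality
  have hvN := PSVT.vonNeumann_core (svalsDesc P) q' hspA hq'A hsp0 hq'0 u w v z
    (fun i => if svalsDesc P i = 0 then 0 else 1)
    (fun i => if (i : ℕ) < m then 1 else 0)
    (fun _ => 1) (fun _ => 1)
    huu hww hvv hzz
    (fun i => by by_cases h : svalsDesc P i = 0 <;> simp [h])
    (fun i => by by_cases h : (i : ℕ) < m <;> simp [h])
    (fun i => le_rfl) (fun i => le_rfl)
  have dotPQ := PSVT.dotM_decomp P Q (svalsDesc P) q' u w v z hPdec hQdec
  have hPQle : (∑ a, ∑ b, P a b * Q a b) ≤ ∑ i, svalsDesc P i * q' i := by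
    rw [dotPQ]; exact hvN
  -- ∑ P² and ∑ Q²
  have dotPP := PSVT.dotM_decomp P P (svalsDesc P) (svalsDesc P) u u v v hPdec hPdec
  have hPP : (∑ a, ∑ b, P a b * P a b) = ∑ i, svalsDesc P i ^ 2 := by
    rw [dotPP]
    refine Finset.sum_congr rfl fun i _ => ?_
    rw [Finset.sum_eq_single i]
    · rw [huu i i, hvv i i, if_pos rfl, if_pos rfl]
      by_cases h : svalsDesc P i = 0
      · rw [if_pos h, h]; ring
      · rw [if_neg h]; ring
    · intro j _ hji
      have hij : i ≠ j := fun h => hji h.symm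
      rw [huu i j, hvv i j, if_neg hij, if_neg hij]
      ring
    · intro h; exact absurd (Finset.mem_univ i) h
  have dotQQ := PSVT.dotM_decomp Q Q q' q' w w z z hQdec hQdec
  have hQQ : (∑ a, ∑ b, Q a b * Q a b) = ∑ i, q' i ^ 2 := by
    rw [dotQQ]
    refine Finset.sum_congr rfl fun i _ => ?_
    rw [Finset.sum_eq_single i]
    · rw [hww i i, hzz i i, if_pos rfl, if_pos rfl]
      by_cases h : (i : ℕ) < m
      · rw [if_pos h]; ring
      · have : q' i = 0 := by rw [hq'_app, if_neg h]
        rw [if_neg h, this]; ring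
    · intro j _ hji
      have hij : i ≠ j := fun h => hji h.symm
      rw [hww i j, hzz i j, if_neg hij, if_neg hij]
      ring
    · intro h; exact absurd (Finset.mem_univ i) h
  -- Frobenius expansion
  have hfrobPQ : frobSq (P - Q) = (∑ a, ∑ b, P a b * P a b)
      - 2 * (∑ a, ∑ b, P a b * Q a b) + (∑ a, ∑ b, Q a b * Q a b) := by
    unfold frobSq
    have e : ∀ (a : Fin m) (b : Fin n), ((P - Q) a b) ^ 2
        = P a b * P a b - 2 * (P a b * Q a b) + Q a b * Q a b := by
      intro a b; rw [Matrix.sub_apply]; ring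
    have row : ∀ a : Fin m, (∑ b, ((P - Q) a b) ^ 2)
        = (∑ b, P a b * P a b) - 2 * (∑ b, P a b * Q a b) + (∑ b, Q a b * Q a b) := by
      intro a
      rw [Finset.sum_congr rfl fun b _ => e a b, Finset.sum_add_distrib,
        Finset.sum_sub_distrib, ← Finset.mul_sum]
    rw [Finset.sum_congr rfl fun a _ => row a, Finset.sum_add_distrib,
      Finset.sum_sub_distrib, ← Finset.mul_sum]
  have key1 : ∑ i, (svalsDesc P i - q' i) ^ 2 ≤ frobSq (P - Q) := by
    have expand : ∑ i, (svalsDesc P i - q' i) ^ 2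
        = (∑ i, svalsDesc P i ^ 2) - 2 * (∑ i, svalsDesc P i * q' i) + ∑ i, q' i ^ 2 := by
      rw [Finset.sum_congr rfl fun i (_ : i ∈ Finset.univ) =>
        (by ring : (svalsDesc P i - q' i) ^ 2
          = svalsDesc P i ^ 2 - 2 * (svalsDesc P i * q' i) + q' i ^ 2)]
      rw [Finset.sum_add_distrib, Finset.sum_sub_distrib, ← Finset.mul_sum]
    rw [hfrobPQ, hPP, hQQ, expand]
    linarith
  -- final chain
  set F : Finset (Fin n) := Finset.univ.filter (fun i : Fin n => N ≤ (i : ℕ)) with hF_def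
  have hsub : ∑ i ∈ F, (svalsDesc P i - q' i) ^ 2 ≤ ∑ i, (svalsDesc P i - q' i) ^ 2 :=
    Finset.sum_le_sum_of_subset_of_nonneg (Finset.filter_subset _ _)
      (fun i _ _ => sq_nonneg _)
  have hterm : ∀ i ∈ F, τ * d' i + (1/2) * (if (i : ℕ) < m then (σ i - dd i) ^ 2 else 0)
      ≤ τ * svalsDesc P i + (1/2) * (svalsDesc P i - q' i) ^ 2 := by
    intro i hi
    have hiN : N ≤ (i : ℕ) := (Finset.mem_filter.mp hi).2
    have hd : d' i = max (q' i - τ) 0 := by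
      by_cases h : (i : ℕ) < m
      · rw [hd'_app, if_pos h, hdd_app, if_neg (by omega), hq'_app, if_pos h]
      · rw [hd'_app, if_neg h, hq'_app, if_neg h, max_eq_right (by linarith)]
    have he : (if (i : ℕ) < m then (σ i - dd i) ^ 2 else 0) = (min (q' i) τ) ^ 2 := by
      by_cases h : (i : ℕ) < m
      · rw [if_pos h, hdd_app, if_neg (by omega), PSVT.sub_max_eq_min, hq'_app, if_pos h]
      · rw [if_neg h, hq'_app, if_neg h, min_eq_left hτ.le]
        norm_num
    rw [hd, he]
    exact PSVT.scalar_opt τ (svalsDesc P i) (q' i) hτ (hsp0 i) (hq'0 i)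
  rw [hLHS1, hLHS2, hLHS2']
  have step : τ * ∑ i ∈ F, d' i
        + (1/2) * ∑ i ∈ F, (if (i : ℕ) < m then (σ i - dd i) ^ 2 else 0)
      ≤ τ * ∑ i ∈ F, svalsDesc P i + (1/2) * ∑ i ∈ F, (svalsDesc P i - q' i) ^ 2 := by
    rw [Finset.mul_sum, Finset.mul_sum, Finset.mul_sum, Finset.mul_sum,
      ← Finset.sum_add_distrib, ← Finset.sum_add_distrib]
    exact Finset.sum_le_sum fun i hi => by
      have := hterm i hi
      linarith
  have hPSN : partialSumNorm N P = ∑ i ∈ F, svalsDesc P i := rfl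
  rw [hPSN]
  have hfin : (1/2 : ℝ) * ∑ i ∈ F, (svalsDesc P i - q' i) ^ 2 ≤ (1/2) * frobSq (P - Q) := by
    have := hsub.trans key1
    linarith
  calc τ * ∑ i ∈ F, d' i
        + (1/2) * ∑ i ∈ F, (if (i : ℕ) < m then (σ i - dd i) ^ 2 else 0)
      ≤ τ * ∑ i ∈ F, svalsDesc P i + (1/2) * ∑ i ∈ F, (svalsDesc P i - q' i) ^ 2 := step
    _ ≤ τ * ∑ i ∈ F, svalsDesc P i + (1/2) * frobSq (P - Q) := by linarith
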